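/- Let C be a triangulated category with a weight structure w and m ≤ n. If M is a retract of an object M~ that is an extension of an element of C_{w≥n+1} by an element of C_{w≤m-1} (i.e., there is a distinguished triangle L → M~ → R → L[1] with L ∈ C_{w≤m-1}, R ∈ C_{w≥n+1}), then M is without weights m,...,n. -/

import Mathlib

open CategoryTheory CategoryTheory.Limits CategoryTheory.Pretriangulated Opposite

universe v u

variable (C : Type u) [Category.{v} C] [Preadditive C] [HasZeroObject C]
  [HasShift C ℤ] [∀ n : ℤ, (shiftFunctor C n).Additive] [Pretriangulated C]

/-- A weight structure on the triangulated category `C`. -/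
structure WeightStructure where
  /-- the class `C_{w ≤ n}` -/
  le : ℤ → Set C
  /-- the class `C_{w ≥ n}` -/
  ge : ℤ → Set C
  le_iso_closed : ∀ (n : ℤ) (X Y : C), (X ≅ Y) → X ∈ le n → Y ∈ le n
  ge_iso_closed : ∀ (n : ℤ) (X Y : C), (X ≅ Y) → X ∈ ge n → Y ∈ ge n
  le_retract : ∀ (n : ℤ) (X Y : C) (a : X ⟶ Y) (b : Y ⟶ X),
    a ≫ b = 𝟙 X → Y ∈ le n → X ∈ le n
  ge_retract : ∀ (n : ℤ) (X Y : C) (a : X ⟶ Y) (b : Y ⟶ X),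
    a ≫ b = 𝟙 X → Y ∈ ge n → X ∈ ge n
  le_shift : ∀ (n k : ℤ) (X : C), X ∈ le n → X⟦k⟧ ∈ le (n + k)
  ge_shift : ∀ (n k : ℤ) (X : C), X ∈ ge n → X⟦k⟧ ∈ ge (n + k)
  le_mono : ∀ n : ℤ, le n ⊆ le (n + 1)
  ge_anti : ∀ n : ℤ, ge (n + 1) ⊆ ge n
  orth : ∀ (n : ℤ) (X Y : C), X ∈ le n → Y ∈ ge (n + 1) → ∀ f : X ⟶ Y, f = 0
  decomp : ∀ (X : C) (k : ℤ), ∃ (A B : C) (x : A ⟶ X) (y : X ⟶ B) (δ : B ⟶ A⟦(1 : ℤ)⟧),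
    (Triangle.mk x y δ ∈ distTriang C) ∧ A ∈ le k ∧ B ∈ ge (k + 1)

variable {C}

/-- `(A, B, x, y)` is a `k`-weight decomposition of `X`. -/
def WeightStructure.IsWeightDecomp (w : WeightStructure C) (k : ℤ) {X : C} (A B : C)
    (x : A ⟶ X) (y : X ⟶ B) : Prop :=
  (∃ δ : B ⟶ A⟦(1 : ℤ)⟧, Triangle.mk x y δ ∈ distTriang C) ∧ A ∈ w.le k ∧ B ∈ w.ge (k + 1)

/-- `g : M ⟶ N` kills weights `m, …, n`. -/
def WeightStructure.KillsWeights (w : WeightStructure C) (m n : ℤ) {M N : C}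
    (g : M ⟶ N) : Prop :=
  ∃ (A A' B B' : C) (x : A ⟶ M) (x' : M ⟶ A') (y' : B ⟶ N) (y : N ⟶ B'),
    w.IsWeightDecomp n A A' x x' ∧ w.IsWeightDecomp (m - 1) B B' y' y ∧
      x ≫ g ≫ y = 0

/-- The class of objects of `C` without weights `m, …, n`. -/
def WeightStructure.without (w : WeightStructure C) (m n : ℤ) : Set C :=
  {M : C | w.KillsWeights m n (𝟙 M)}



/-- A retract of an extension of an element of `C_{w ≥ n+1}` by an element of
`C_{w ≤ m-1}` is without weights `m, …, n`. -/
theorem stmt5 (w : WeightStructure C) (m n : ℤ) (hmn : m ≤ n) {M Mt : C}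
    (a : M ⟶ Mt) (b : Mt ⟶ M) (hab : a ≫ b = 𝟙 M) (L R : C) (f : L ⟶ Mt)
    (g : Mt ⟶ R) (δ : R ⟶ L⟦(1 : ℤ)⟧)
    (hT : Triangle.mk f g δ ∈ distTriang C) (hL : L ∈ w.le (m - 1))
    (hR : R ∈ w.ge (n + 1)) :
    M ∈ w.without m n := by
  obtain ⟨A, A', x, x', δ₁, hT₁, hA, hA'⟩ := w.decomp M n
  obtain ⟨B, B', y', y, δ₂, hT₂, hB, hB'⟩ := w.decomp M (m - 1)
  refine ⟨A, A', B, B', x, x', y', y, ⟨⟨δ₁, hT₁⟩, hA, hA'⟩, ⟨⟨δ₂, hT₂⟩, hB, hB'⟩, ?_⟩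
  have h1 : (x ≫ a) ≫ g = 0 := w.orth n A R hA hR _
  obtain ⟨φ, hφ⟩ := Triangle.coyoneda_exact₂ _ hT (x ≫ a) h1
  have h2 : f ≫ b ≫ y = 0 := w.orth (m - 1) L B' hL hB' _
  simp only [Triangle.mk] at hφ
  calc x ≫ (𝟙 M) ≫ y = (x ≫ a ≫ b) ≫ y := by rw [hab]; simp
    _ = φ ≫ f ≫ b ≫ y := by rw [← Category.assoc, hφ]; exact (Category.assoc (obj := C) (φ ≫ f) b y).trans (Category.assoc (obj := C) φ f (b ≫ y))
    _ = 0 := by erw [h2, comp_zero]
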